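/- Suppose a < q < b in [0,1] satisfy: ūB(y) > ūA(y) for all y ∈ (a, q); ūA(y) > ūB(y) for all y ∈ (q, b); either a = 0 and ūB(0) > ūA(0), or there is a₀ < a with ūA > ūB on (a₀, a); and either b = 1 and ūA(1) > ūB(1), or there is b₀ > b with ūB > ūA on (b, b₀). Then every Carathéodory solution x of the continuous-time imitation population dynamics with x(0) in the interior of 𝒳_s and σ(x(0)) = q converges, as t → ∞, to one of the three points aρ, qρ, bρ. -/

import Mathlib

open scoped Classical
open MeasureTheory Filter Set

/-- The state space `ℝ^p`, with the Euclidean norm. -/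
abbrev Vec (p : ℕ) := EuclideanSpace ℝ (Fin p)

/-- Maximum of finitely many polynomial utilities at `y`. -/
noncomputable def ubar {p : ℕ} (u : Fin p → Polynomial ℝ) (y : ℝ) : ℝ :=
  ⨆ i, (u i).eval y

/-- The total proportion of `A`-players: `σ(x) = Σ_i x_i`. -/
noncomputable def sigma' {p : ℕ} (x : Vec p) : ℝ := ∑ i, x i

/-- The state space `𝒳_s = ∏_i [0, ρ_i]`. -/
def Xs {p : ℕ} (ρ : Vec p) : Set (Vec p) := {x | ∀ i, x i ∈ Set.Icc 0 (ρ i)}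

/-- The set-valued map of the continuous-time imitation population dynamics. -/
noncomputable def Vmap {p : ℕ} (ρ : Vec p) (uA uB : Fin p → Polynomial ℝ)
    (x : Vec p) : Set (Vec p) :=
  if x ∈ interior (Xs ρ) ∧ ubar uB (sigma' x) < ubar uA (sigma' x) then {ρ - x}
  else if x ∈ interior (Xs ρ) ∧ ubar uA (sigma' x) < ubar uB (sigma' x) then {-x}
  else segment ℝ (ρ - x) (-x)

/-- A Carathéodory solution of the continuous-time imitation population dynamics on `[0,∞)`:
a locally absolutely continuous `𝒳_s`-valued function whose derivative lies in `Vmap`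
almost everywhere, expressed in integral form. -/
def IsPopSol {p : ℕ} (ρ : Vec p) (uA uB : Fin p → Polynomial ℝ) (x : ℝ → Vec p) : Prop :=
  (∀ t, 0 ≤ t → x t ∈ Xs ρ) ∧
  ∃ v : ℝ → Vec p,
    (∀ᵐ t ∂(MeasureTheory.volume.restrict (Set.Ici (0:ℝ))), v t ∈ Vmap ρ uA uB (x t)) ∧
    (∀ t, 0 ≤ t → IntervalIntegrable v MeasureTheory.volume 0 t) ∧
    (∀ t, 0 ≤ t → x t = x 0 + ∫ s in (0:ℝ)..t, v s)

open scoped Topology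
open intervalIntegral

section PCAux

lemma pc_primitive_continuousOn {E : Type*} [NormedAddCommGroup E] [NormedSpace ℝ E]
    (v : ℝ → E) (hv : ∀ t, 0 ≤ t → IntervalIntegrable v volume 0 t) :
    ContinuousOn (fun t => ∫ s in (0:ℝ)..t, v s) (Ici 0) := by
  intro t₀ ht₀
  have ht₀' : (0:ℝ) ≤ t₀ := mem_Ici.1 ht₀
  have hmax : max (0:ℝ) (t₀ + 1) = t₀ + 1 := max_eq_right (by linarith)
  have hint : IntervalIntegrable v volume (min 0 0) (max 0 (t₀ + 1)) := by
    rw [min_self, hmax]; exact hv (t₀ + 1) (by linarith)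
  have h := intervalIntegral.continuousWithinAt_primitive (μ := volume) (a := 0)
    (b₀ := t₀) (b₁ := 0) (b₂ := t₀ + 1) (measure_singleton _) hint
  refine h.mono_of_mem_nhdsWithin ?_
  have h1 : Ici (0:ℝ) ∩ Iio (t₀ + 1) ∈ 𝓝[Ici 0] t₀ :=
    Filter.inter_mem self_mem_nhdsWithin
      (mem_nhdsWithin_of_mem_nhds (Iio_mem_nhds (lt_add_one t₀)))
  exact Filter.mem_of_superset h1 (fun y hy => ⟨hy.1, le_of_lt hy.2⟩)

lemma pc_zero (d : ℝ → ℝ) (hd : Continuous d)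
    (h : ∀ t, 0 ≤ t → d t = -∫ s in (0:ℝ)..t, d s) :
    ∀ t, 0 ≤ t → d t = 0 := by
  have hFd : ∀ t, HasDerivAt (fun u => ∫ s in (0:ℝ)..u, d s) (d t) t := fun t =>
    intervalIntegral.integral_hasDerivAt_right (hd.intervalIntegrable 0 t)
      (hd.stronglyMeasurableAtFilter volume (𝓝 t)) hd.continuousAt
  set F : ℝ → ℝ := fun u => ∫ s in (0:ℝ)..u, d s with hFdef
  have hFc : Continuous F := by
    rw [continuous_iff_continuousAt]; exact fun t => (hFd t).continuousAt
  intro t ht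
  have key : Real.exp t * F t - Real.exp 0 * F 0 =
      ∫ s in (0:ℝ)..t, (Real.exp s * F s + Real.exp s * d s) := by
    refine (intervalIntegral.integral_eq_sub_of_hasDerivAt
      (f := fun u => Real.exp u * F u)
      (f' := fun u => Real.exp u * F u + Real.exp u * d u) (fun s _ => ?_) ?_).symm
    · exact (Real.hasDerivAt_exp s).mul (hFd s)
    · exact ((Real.continuous_exp.mul hFc).add (Real.continuous_exp.mul hd)).intervalIntegrable 0 t
  have hzero : ∫ s in (0:ℝ)..t, (Real.exp s * F s + Real.exp s * d s) = 0 := by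
    rw [intervalIntegral.integral_congr (g := fun _ => (0:ℝ)) ?_]
    · simp
    · intro s hs
      rw [uIcc_of_le ht] at hs
      have hds : d s = -F s := h s hs.1
      show Real.exp s * F s + Real.exp s * d s = 0
      rw [hds]; ring
  have hF0 : F 0 = 0 := intervalIntegral.integral_same
  rw [hzero, hF0, mul_zero, sub_zero] at key
  have hFt : F t = 0 := by
    have := Real.exp_pos t
    nlinarith
  have hft : (∫ s in (0:ℝ)..t, d s) = F t := rfl
  rw [h t ht, hft, hFt, neg_zero]

lemma pc_exp_neg_integral (t : ℝ) :
    ∫ s in (0:ℝ)..t, Real.exp (-s) = 1 - Real.exp (-t) := by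
  have h : ∀ s ∈ uIcc (0:ℝ) t, HasDerivAt (fun u => -Real.exp (-u)) (Real.exp (-s)) s := by
    intro s _
    have h1 : HasDerivAt (fun u : ℝ => -u) (-1) s := (hasDerivAt_id s).neg
    have h2 := (Real.hasDerivAt_exp (-s)).comp s h1
    have h3 := h2.neg
    exact h3.congr_deriv (by ring)
  have := intervalIntegral.integral_eq_sub_of_hasDerivAt h
    ((Real.continuous_exp.comp continuous_neg).intervalIntegrable 0 t)
  simpa using this

lemma pc_decay (f w : ℝ → ℝ) (hf : Continuous f)
    (hw : ∀ t, 0 ≤ t → IntervalIntegrable w volume 0 t)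
    (hae : ∀ᵐ τ ∂(volume.restrict (Ici (0:ℝ))), w τ = - f τ)
    (heq : ∀ t, 0 ≤ t → f t = f 0 + ∫ s in (0:ℝ)..t, w s) :
    ∀ t, 0 ≤ t → f t = f 0 * Real.exp (-t) := by
  have hae' : ∀ᵐ τ ∂(volume : Measure ℝ), τ ∈ Ici (0:ℝ) → w τ = - f τ :=
    (ae_restrict_iff' measurableSet_Ici).1 hae
  have hint : ∀ t, 0 ≤ t → (∫ s in (0:ℝ)..t, w s) = ∫ s in (0:ℝ)..t, (-f s) := by
    intro t ht
    refine intervalIntegral.integral_congr_ae ?_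
    filter_upwards [hae'] with τ hτ hmem
    rw [uIoc_of_le ht] at hmem
    exact hτ (le_of_lt hmem.1)
  set d : ℝ → ℝ := fun t => f t - f 0 * Real.exp (-t) with hd
  have hdc : Continuous d := hf.sub (continuous_const.mul (Real.continuous_exp.comp continuous_neg))
  have hkey : ∀ t, 0 ≤ t → d t = -∫ s in (0:ℝ)..t, d s := by
    intro t ht
    have hc : Continuous (fun s : ℝ => f 0 * Real.exp (-s)) := by fun_prop
    have h1 : (∫ s in (0:ℝ)..t, d s)
        = (∫ s in (0:ℝ)..t, f s) - f 0 * (1 - Real.exp (-t)) := by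
      have hsub : (∫ s in (0:ℝ)..t, d s)
          = (∫ s in (0:ℝ)..t, f s) - ∫ s in (0:ℝ)..t, f 0 * Real.exp (-s) := by
        rw [← intervalIntegral.integral_sub (hf.intervalIntegrable 0 t)
          (hc.intervalIntegrable 0 t)]
      rw [hsub, intervalIntegral.integral_const_mul, pc_exp_neg_integral]
    have h2 : f t = f 0 - ∫ s in (0:ℝ)..t, f s := by
      rw [heq t ht, hint t ht, intervalIntegral.integral_neg]; ring
    rw [hd, h1]
    simp only
    rw [h2]; ring
  intro t ht
  have := pc_zero d hdc hkey t ht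
  rw [hd] at this
  simp only at this
  linarith

lemma pc_pos (f u : ℝ → ℝ) (hf : Continuous f) (hu : Continuous u)
    (hmono : ∀ t₁ t₂, 0 ≤ t₁ → t₁ ≤ t₂ → u t₁ ≤ u t₂) (hu0 : u 0 = 0)
    (heq : ∀ t, 0 ≤ t → f t = f 0 + u t - ∫ s in (0:ℝ)..t, f s) :
    ∀ t, 0 ≤ t → f 0 * Real.exp (-t) ≤ f t := by
  have hFd : ∀ t, HasDerivAt (fun x => ∫ s in (0:ℝ)..x, f s) (f t) t := fun t =>
    intervalIntegral.integral_hasDerivAt_right (hf.intervalIntegrable 0 t)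
      (hf.stronglyMeasurableAtFilter volume (𝓝 t)) hf.continuousAt
  set F : ℝ → ℝ := fun x => ∫ s in (0:ℝ)..x, f s with hFdef
  have hFc : Continuous F := by
    rw [continuous_iff_continuousAt]; exact fun t => (hFd t).continuousAt
  intro t ht
  have key : Real.exp t * F t - Real.exp 0 * F 0 =
      ∫ s in (0:ℝ)..t, (Real.exp s * F s + Real.exp s * f s) := by
    refine (intervalIntegral.integral_eq_sub_of_hasDerivAt
      (f := fun x => Real.exp x * F x)
      (f' := fun x => Real.exp x * F x + Real.exp x * f x) (fun s _ => ?_) ?_).symm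
    · exact (Real.hasDerivAt_exp s).mul (hFd s)
    · exact ((Real.continuous_exp.mul hFc).add (Real.continuous_exp.mul hf)).intervalIntegrable 0 t
  have hF0 : F 0 = 0 := intervalIntegral.integral_same
  have hbound : (∫ s in (0:ℝ)..t, (Real.exp s * F s + Real.exp s * f s))
      ≤ ∫ s in (0:ℝ)..t, ((f 0 + u t) * Real.exp s) := by
    refine intervalIntegral.integral_mono_on ht
      (((Real.continuous_exp.mul hFc).add (Real.continuous_exp.mul hf)).intervalIntegrable 0 t)
      ((continuous_const.mul Real.continuous_exp).intervalIntegrable 0 t) ?_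
    intro s hs
    have hfs : f s = f 0 + u s - F s := heq s hs.1
    have hus : u s ≤ u t := hmono s t hs.1 hs.2
    have : Real.exp s * F s + Real.exp s * f s = (f 0 + u s) * Real.exp s := by
      rw [hfs]; ring
    rw [this]
    have := Real.exp_pos s
    nlinarith
  have hval : (∫ s in (0:ℝ)..t, ((f 0 + u t) * Real.exp s))
      = (f 0 + u t) * (Real.exp t - 1) := by
    rw [intervalIntegral.integral_const_mul, integral_exp, Real.exp_zero]
  rw [hF0, mul_zero, sub_zero] at key
  have hG : Real.exp t * F t ≤ (f 0 + u t) * (Real.exp t - 1) := by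
    rw [key]; exact hbound.trans (le_of_eq hval)
  have hft : f t = f 0 + u t - F t := heq t ht
  have hut : 0 ≤ u t := hu0 ▸ hmono 0 t le_rfl ht
  have hexp := Real.exp_pos t
  have hexpneg : Real.exp (-t) = 1 / Real.exp t := by
    rw [Real.exp_neg]; ring
  -- f t = f0 + u t - F t ≥ (f0 + u t) * exp (-t) ≥ f0 * exp (-t)
  have h1 : F t ≤ (f 0 + u t) * (1 - Real.exp (-t)) := by
    rw [hexpneg]
    rw [div_eq_inv_mul, mul_one]
    have h2 : Real.exp t * F t ≤ Real.exp t * ((f 0 + u t) * (1 - (Real.exp t)⁻¹)) := by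
      calc Real.exp t * F t ≤ (f 0 + u t) * (Real.exp t - 1) := hG
        _ = Real.exp t * ((f 0 + u t) * (1 - (Real.exp t)⁻¹)) := by
            field_simp
    exact le_of_mul_le_mul_left h2 hexp
  have hexpneg_pos := Real.exp_pos (-t)
  have hexpneg_le : Real.exp (-t) ≤ 1 := by
    rw [Real.exp_le_one_iff]; linarith
  nlinarith

/-- integral identity hypothesis -/
def PCInt (s g : ℝ → ℝ) : Prop :=
  (∀ t₁ t₂, 0 ≤ t₁ → t₁ ≤ t₂ → IntervalIntegrable g volume t₁ t₂) ∧
  (∀ t₁ t₂, 0 ≤ t₁ → t₁ ≤ t₂ → s t₂ = s t₁ + ∫ τ in t₁..t₂, g τ)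

section Barrier

variable (s g : ℝ → ℝ)

lemma pc_glow (hig : PCInt s g)
    (α β c : ℝ) (hcβ : c < β)
    (hforce : ∀ᵐ τ ∂(volume.restrict (Ici (0:ℝ))), α < s τ → s τ < β → g τ = 1 - s τ)
    (T t₃ : ℝ) (hT0 : 0 ≤ T) (hTt₃ : T ≤ t₃)
    (hmem : ∀ τ ∈ Icc T t₃, α < s τ ∧ s τ ≤ c) :
    (1 - c) * (t₃ - T) ≤ ∫ τ in T..t₃, g τ := by
  obtain ⟨hgint, hint⟩ := hig
  have hforce' : ∀ᵐ τ ∂(volume : Measure ℝ), τ ∈ Ici (0:ℝ) → α < s τ → s τ < β → g τ = 1 - s τ :=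
    (ae_restrict_iff' measurableSet_Ici).1 hforce
  have hconst : IntervalIntegrable (fun _ : ℝ => 1 - c) volume T t₃ := intervalIntegrable_const
  have hgg : IntervalIntegrable g volume T t₃ := hgint T t₃ hT0 hTt₃
  have hle : (fun _ : ℝ => 1 - c) ≤ᵐ[volume.restrict (Icc T t₃)] g := by
    have hsub : ∀ᵐ τ ∂(volume.restrict (Icc T t₃)),
        τ ∈ Ici (0:ℝ) → α < s τ → s τ < β → g τ = 1 - s τ := ae_restrict_of_ae hforce'
    have hmem' : ∀ᵐ τ ∂(volume.restrict (Icc T t₃)), τ ∈ Icc T t₃ :=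
      ae_restrict_mem measurableSet_Icc
    filter_upwards [hsub, hmem'] with τ hτ hτm
    obtain ⟨hα, hc'⟩ := hmem τ hτm
    have h0τ : τ ∈ Ici (0:ℝ) := le_trans hT0 hτm.1
    have hgτ : g τ = 1 - s τ := hτ h0τ hα (lt_of_le_of_lt hc' hcβ)
    show (1:ℝ) - c ≤ g τ
    rw [hgτ]
    linarith
  calc (1 - c) * (t₃ - T) = ∫ _ in T..t₃, (1 - c) := by
        rw [intervalIntegral.integral_const, smul_eq_mul]; ring
    _ ≤ ∫ τ in T..t₃, g τ := intervalIntegral.integral_mono_ae_restrict hTt₃ hconst hgg hle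

lemma pc_barrier_up (hs : Continuous s) (hig : PCInt s g)
    (α β c : ℝ) (hαc : α < c) (hcβ : c < β) (hc1 : c < 1)
    (hforce : ∀ᵐ τ ∂(volume.restrict (Ici (0:ℝ))), α < s τ → s τ < β → g τ = 1 - s τ)
    (t₁ : ℝ) (ht₁ : 0 ≤ t₁) (h1 : c ≤ s t₁) :
    ∀ t, t₁ ≤ t → c ≤ s t := by
  intro t ht
  by_contra hlt
  push_neg at hlt
  set K : Set ℝ := {τ | τ ∈ Icc t₁ t ∧ c ≤ s τ} with hK
  have hKco : IsCompact K := by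
    have : K = Icc t₁ t ∩ s ⁻¹' (Ici c) := by
      ext τ; simp [hK, and_comm]
    rw [this]
    exact isCompact_Icc.inter_right (isClosed_Ici.preimage hs)
  have hKne : K.Nonempty := ⟨t₁, ⟨le_rfl, ht⟩, h1⟩
  set T := sSup K with hT
  have hTK : T ∈ K := hKco.sSup_mem hKne
  have hTt : T < t := lt_of_le_of_ne hTK.1.2 (fun h => absurd hTK.2 (by rw [h]; exact not_le.2 hlt))
  have hT0 : 0 ≤ T := le_trans ht₁ hTK.1.1
  have hafter : ∀ τ, T < τ → τ ≤ t → s τ < c := by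
    intro τ h2 h3
    by_contra hge
    push_neg at hge
    have : τ ∈ K := ⟨⟨le_trans hTK.1.1 (le_of_lt h2), h3⟩, hge⟩
    exact absurd (le_csSup hKco.bddAbove this) (not_le.2 h2)
  have hsT : s T = c := by
    refine le_antisymm ?_ hTK.2
    have htend : Tendsto s (𝓝[>] T) (𝓝 (s T)) :=
      (hs.continuousAt).continuousWithinAt.tendsto
    have hev : ∀ᶠ τ in 𝓝[>] T, s τ ≤ c := by
      have hIoc : Ioc T t ∈ 𝓝[>] T := Ioc_mem_nhdsGT_of_mem ⟨le_rfl, hTt⟩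
      filter_upwards [hIoc] with τ hτ
      exact le_of_lt (hafter τ hτ.1 hτ.2)
    exact le_of_tendsto htend hev
  have hnb : s ⁻¹' (Ioi α) ∈ 𝓝 T :=
    hs.continuousAt.preimage_mem_nhds (Ioi_mem_nhds (by rw [hsT]; exact hαc))
  obtain ⟨ε, hε, hball⟩ := Metric.mem_nhds_iff.1 hnb
  set t₃ := min (T + ε / 2) t with ht₃
  have hTt₃ : T < t₃ := lt_min (by linarith) hTt
  have ht₃t : t₃ ≤ t := min_le_right _ _
  have hmem : ∀ τ ∈ Icc T t₃, α < s τ ∧ s τ ≤ c := by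
    intro τ hτ
    constructor
    · apply hball
      have habs : |τ - T| < ε := by
        rw [abs_lt]
        refine ⟨by linarith [hτ.1], ?_⟩
        have h5 : t₃ ≤ T + ε / 2 := min_le_left _ _
        have := hτ.2
        linarith
      simpa [Metric.mem_ball, Real.dist_eq] using habs
    · rcases eq_or_lt_of_le hτ.1 with h | h
      · rw [← h, hsT]
      · exact le_of_lt (hafter τ h (le_trans hτ.2 ht₃t))
  have heq3 : s t₃ = s T + ∫ τ in T..t₃, g τ := hig.2 T t₃ hT0 (le_of_lt hTt₃)
  have hlow := pc_glow s g hig α β c hcβ hforce T t₃ hT0 (le_of_lt hTt₃) hmem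
  have : c < s t₃ := by
    rw [heq3, hsT]
    nlinarith [hTt₃]
  exact absurd this (not_lt.2 (le_of_lt (hafter t₃ hTt₃ ht₃t)))

lemma pc_drift_up (hs : Continuous s) (hig : PCInt s g)
    (α β : ℝ) (hβ1 : β ≤ 1)
    (hforce : ∀ᵐ τ ∂(volume.restrict (Ici (0:ℝ))), α < s τ → s τ < β → g τ = 1 - s τ)
    (hbd : ∀ τ, 0 ≤ τ → s τ ≤ 1)
    (t₁ : ℝ) (ht₁ : 0 ≤ t₁) (hs1 : α < s t₁) (hs2 : s t₁ < β)
    (c : ℝ) (hcβ : c < β) (hc1 : c < 1) :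
    ∃ t₂, t₁ ≤ t₂ ∧ c ≤ s t₂ := by
  by_contra hno
  push_neg at hno
  have hst₁c : s t₁ < c := hno t₁ le_rfl
  have hlow : ∀ t, t₁ ≤ t → s t₁ ≤ s t := by
    have hst₁1 : s t₁ < 1 := lt_of_lt_of_le hs2 hβ1
    exact pc_barrier_up s g hs hig α β (s t₁) hs1 hs2 hst₁1 hforce t₁ ht₁ le_rfl
  have h2c : 0 < 1 - c := by linarith
  set t := t₁ + (2 - s t₁) / (1 - c) with htdef
  have htt₁ : t₁ ≤ t := by
    rw [htdef]
    have h3 : 0 ≤ (2 - s t₁) / (1 - c) := div_nonneg (by linarith) (le_of_lt h2c)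
    linarith
  have hmem : ∀ τ ∈ Icc t₁ t, α < s τ ∧ s τ ≤ c := fun τ hτ =>
    ⟨lt_of_lt_of_le hs1 (hlow τ hτ.1), le_of_lt (hno τ hτ.1)⟩
  have hkey := pc_glow s g hig α β c hcβ hforce t₁ t ht₁ htt₁ hmem
  have heqt : s t = s t₁ + ∫ τ in t₁..t, g τ := hig.2 t₁ t ht₁ htt₁
  have hcalc : (1 - c) * (t - t₁) = 2 - s t₁ := by
    rw [htdef]
    field_simp
    ring
  have : 2 ≤ s t := by
    rw [heqt]
    rw [hcalc] at hkey
    linarith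
  have := hbd t (le_trans ht₁ htt₁)
  linarith

lemma pc_eventually_up (hs : Continuous s) (hig : PCInt s g)
    (α β : ℝ) (hβ1 : β ≤ 1)
    (hforce : ∀ᵐ τ ∂(volume.restrict (Ici (0:ℝ))), α < s τ → s τ < β → g τ = 1 - s τ)
    (hbd : ∀ τ, 0 ≤ τ → s τ ≤ 1)
    (t₁ : ℝ) (ht₁ : 0 ≤ t₁) (hs1 : α < s t₁) (hs2 : s t₁ < β)
    (c : ℝ) (hαc : α < c) (hcβ : c < β) (hc1 : c < 1) :
    ∀ᶠ t in atTop, c ≤ s t := by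
  obtain ⟨t₂, ht₂, hc⟩ := pc_drift_up s g hs hig α β hβ1 hforce hbd t₁ ht₁ hs1 hs2 c hcβ hc1
  have := pc_barrier_up s g hs hig α β c hαc hcβ hc1 hforce t₂ (le_trans ht₁ ht₂) hc
  exact eventually_atTop.2 ⟨t₂, this⟩

end Barrier

section Down

variable (s g : ℝ → ℝ)

lemma pc_transform (hig : PCInt s g) : PCInt (fun τ => 1 - s τ) (fun τ => - g τ) := by
  constructor
  · exact fun t₁ t₂ h1 h2 => (hig.1 t₁ t₂ h1 h2).neg
  · intro t₁ t₂ h1 h2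
    show 1 - s t₂ = 1 - s t₁ + ∫ τ in t₁..t₂, - g τ
    rw [intervalIntegral.integral_neg, hig.2 t₁ t₂ h1 h2]
    ring

lemma pc_barrier_down (hs : Continuous s) (hig : PCInt s g)
    (α β c : ℝ) (hαc : α < c) (hcβ : c < β) (hc0 : 0 < c)
    (hforce : ∀ᵐ τ ∂(volume.restrict (Ici (0:ℝ))), α < s τ → s τ < β → g τ = - s τ)
    (t₁ : ℝ) (ht₁ : 0 ≤ t₁) (h1 : s t₁ ≤ c) :
    ∀ t, t₁ ≤ t → s t ≤ c := by
  have hforce' : ∀ᵐ τ ∂(volume.restrict (Ici (0:ℝ))),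
      (1 - β) < 1 - s τ → 1 - s τ < 1 - α → - g τ = 1 - (1 - s τ) := by
    filter_upwards [hforce] with τ hτ h2 h3
    have : g τ = - s τ := hτ (by linarith) (by linarith)
    rw [this]; ring
  have := pc_barrier_up (fun τ => 1 - s τ) (fun τ => - g τ)
    (continuous_const.sub hs) (pc_transform s g hig)
    (1 - β) (1 - α) (1 - c) (by linarith) (by linarith) (by linarith)
    hforce' t₁ ht₁ (by show (1:ℝ) - c ≤ 1 - s t₁; linarith)
  intro t ht
  have h2 : 1 - c ≤ 1 - s t := this t ht
  linarith

lemma pc_eventually_down (hs : Continuous s) (hig : PCInt s g)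
    (α β : ℝ) (hα0 : 0 ≤ α)
    (hforce : ∀ᵐ τ ∂(volume.restrict (Ici (0:ℝ))), α < s τ → s τ < β → g τ = - s τ)
    (hbd : ∀ τ, 0 ≤ τ → 0 ≤ s τ)
    (t₁ : ℝ) (ht₁ : 0 ≤ t₁) (hs1 : α < s t₁) (hs2 : s t₁ < β)
    (c : ℝ) (hαc : α < c) (hcβ : c < β) (hc0 : 0 < c) :
    ∀ᶠ t in atTop, s t ≤ c := by
  have hforce' : ∀ᵐ τ ∂(volume.restrict (Ici (0:ℝ))),
      (1 - β) < 1 - s τ → 1 - s τ < 1 - α → - g τ = 1 - (1 - s τ) := by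
    filter_upwards [hforce] with τ hτ h2 h3
    have : g τ = - s τ := hτ (by linarith) (by linarith)
    rw [this]; ring
  have := pc_eventually_up (fun τ => 1 - s τ) (fun τ => - g τ)
    (continuous_const.sub hs) (pc_transform s g hig)
    (1 - β) (1 - α) (by linarith) hforce'
    (fun τ hτ => by show (1:ℝ) - s τ ≤ 1; linarith [hbd τ hτ])
    t₁ ht₁ (by show (1:ℝ) - β < 1 - s t₁; linarith) (by show (1:ℝ) - s t₁ < 1 - α; linarith)
    (1 - c) (by linarith) (by linarith) (by linarith)
  filter_upwards [this] with t htc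
  have h2 : 1 - c ≤ 1 - s t := htc
  linarith

end Down

lemma pc_sigma_tendsto (s g : ℝ → ℝ) (hs : Continuous s) (hig : PCInt s g)
    (a q b : ℝ) (ha : 0 ≤ a) (hb : b ≤ 1) (haq : a < q) (hqb : q < b)
    (hbd0 : ∀ τ, 0 ≤ τ → 0 ≤ s τ) (hbd1 : ∀ τ, 0 ≤ τ → s τ ≤ 1)
    (hs0 : s 0 = q)
    (hfL : ∀ᵐ τ ∂(volume.restrict (Ici (0:ℝ))), a < s τ → s τ < q → g τ = - s τ)
    (hfR : ∀ᵐ τ ∂(volume.restrict (Ici (0:ℝ))), q < s τ → s τ < b → g τ = 1 - s τ)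
    (hfA : a = 0 ∨ ∃ a₀, a₀ < a ∧
      (∀ᵐ τ ∂(volume.restrict (Ici (0:ℝ))), a₀ < s τ → s τ < a → g τ = 1 - s τ))
    (hfB : b = 1 ∨ ∃ b₀, b < b₀ ∧
      (∀ᵐ τ ∂(volume.restrict (Ici (0:ℝ))), b < s τ → s τ < b₀ → g τ = - s τ)) :
    Tendsto s atTop (𝓝 a) ∨ Tendsto s atTop (𝓝 q) ∨ Tendsto s atTop (𝓝 b) := by
  have hq0 : 0 < q := lt_of_le_of_lt ha haq
  have hb0 : 0 < b := lt_trans hq0 hqb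
  have ha1 : a < 1 := lt_of_lt_of_le (lt_trans haq hqb) hb
  by_cases hR : ∃ t, 0 ≤ t ∧ q < s t
  · right; right
    obtain ⟨t₀, ht₀, hqt₀⟩ := hR
    -- find t₁ ≥ 0 with q < s t₁ < b
    have ht₁ : ∃ t₁, 0 ≤ t₁ ∧ q < s t₁ ∧ s t₁ < b := by
      rcases lt_or_ge (s t₀) b with h | h
      · exact ⟨t₀, ht₀, hqt₀, h⟩
      · have hIVT := intermediate_value_Icc ht₀ (hs.continuousOn (s := Icc 0 t₀))
        have hmem : (q + b) / 2 ∈ Icc (s 0) (s t₀) := by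
          rw [hs0]
          constructor <;> [linarith; linarith]
        obtain ⟨t₁, ht₁m, hst₁⟩ := hIVT hmem
        exact ⟨t₁, ht₁m.1, by rw [hst₁]; constructor <;> linarith⟩
    obtain ⟨t₁, ht₁0, hqt₁, ht₁b⟩ := ht₁
    rw [tendsto_order]
    constructor
    · -- ∀ c < b, eventually c < s t
      intro c hc
      set c' := (max c q + b) / 2 with hc'
      have hmaxb : max c q < b := max_lt hc hqb
      have hqc' : q < c' := by
        have h6 : q ≤ max c q := le_max_right c q
        rw [hc']; linarith
      have hcc' : c < c' := by
        have : c ≤ max c q := le_max_left c q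
        rw [hc']
        linarith
      have hc'b : c' < b := by rw [hc']; linarith
      have hc'1 : c' < 1 := lt_of_lt_of_le hc'b hb
      have := pc_eventually_up s g hs hig q b hb hfR hbd1 t₁ ht₁0 hqt₁ ht₁b c' hqc' hc'b hc'1
      filter_upwards [this] with t hct
      linarith
    · -- ∀ c > b, eventually s t < c
      intro c hc
      rcases hfB with hb1 | ⟨b₀, hbb₀, hforceB⟩
      · have : ∀ᶠ t in atTop, t ∈ Ici (0:ℝ) := eventually_ge_atTop 0
        rw [hb1] at hc
        filter_upwards [this] with t ht
        have := hbd1 t ht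
        linarith
      · set ℓ := (b + min c b₀) / 2 with hℓ
        have hbmin : b < min c b₀ := lt_min hc hbb₀
        have hbℓ : b < ℓ := by rw [hℓ]; linarith
        have hℓb₀ : ℓ < b₀ := by
          have : min c b₀ ≤ b₀ := min_le_right _ _
          rw [hℓ]; linarith
        have hℓc : ℓ < c := by
          have : min c b₀ ≤ c := min_le_left _ _
          rw [hℓ]; linarith
        have hbar := pc_barrier_down s g hs hig b b₀ ℓ hbℓ hℓb₀ (by linarith) hforceB
          t₁ ht₁0 (le_of_lt (lt_trans ht₁b hbℓ))
        refine eventually_atTop.2 ⟨t₁, fun t ht => ?_⟩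
        exact lt_of_le_of_lt (hbar t ht) hℓc
  · by_cases hL : ∃ t, 0 ≤ t ∧ s t < q
    · left
      obtain ⟨t₀, ht₀, hqt₀⟩ := hL
      have ht₁ : ∃ t₁, 0 ≤ t₁ ∧ a < s t₁ ∧ s t₁ < q := by
        rcases lt_or_ge a (s t₀) with h | h
        · exact ⟨t₀, ht₀, h, hqt₀⟩
        · have hIVT := intermediate_value_Icc' ht₀ (hs.continuousOn (s := Icc 0 t₀))
          have hmem : (a + q) / 2 ∈ Icc (s t₀) (s 0) := by
            rw [hs0]
            constructor <;> [linarith; linarith]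
          obtain ⟨t₁, ht₁m, hst₁⟩ := hIVT hmem
          exact ⟨t₁, ht₁m.1, by rw [hst₁]; constructor <;> linarith⟩
      obtain ⟨t₁, ht₁0, hat₁, ht₁q⟩ := ht₁
      rw [tendsto_order]
      constructor
      · -- ∀ c < a, eventually c < s t
        intro c hc
        rcases eq_or_lt_of_le ha with ha0 | ha0
        · -- a = 0 : s ≥ 0
          have : ∀ᶠ t in atTop, t ∈ Ici (0:ℝ) := eventually_ge_atTop 0
          filter_upwards [this] with t ht
          have := hbd0 t ht
          linarith
        · rcases hfA with ha0' | ⟨a₀, ha₀a, hforceA⟩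
          · exact absurd ha0' (ne_of_gt ha0)
          · set ℓ := (max a₀ c + a) / 2 with hℓ
            have hmaxa : max a₀ c < a := max_lt ha₀a hc
            have ha₀ℓ : a₀ < ℓ := by
              have : a₀ ≤ max a₀ c := le_max_left _ _
              rw [hℓ]; linarith
            have hcℓ : c < ℓ := by
              have : c ≤ max a₀ c := le_max_right _ _
              rw [hℓ]; linarith
            have hℓa : ℓ < a := by rw [hℓ]; linarith
            have hℓ1 : ℓ < 1 := lt_trans hℓa ha1
            have hbar := pc_barrier_up s g hs hig a₀ a ℓ ha₀ℓ hℓa hℓ1 hforceA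
              0 le_rfl (by rw [hs0]; linarith)
            refine eventually_atTop.2 ⟨0, fun t ht => ?_⟩
            exact lt_of_lt_of_le hcℓ (hbar t ht)
      · -- ∀ c > a, eventually s t < c
        intro c hc
        set ℓ := (a + min c q) / 2 with hℓ
        have hamin : a < min c q := lt_min hc haq
        have haℓ : a < ℓ := by rw [hℓ]; linarith
        have hℓq : ℓ < q := by
          have : min c q ≤ q := min_le_right _ _
          rw [hℓ]; linarith
        have hℓc : ℓ < c := by
          have : min c q ≤ c := min_le_left _ _
          rw [hℓ]; linarith
        have hℓ0 : 0 < ℓ := by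
          have : 0 < min c q := lt_min (lt_of_le_of_lt ha hc) hq0
          rw [hℓ]; linarith
        have := pc_eventually_down s g hs hig a q ha hfL hbd0 t₁ ht₁0 hat₁ ht₁q ℓ haℓ hℓq hℓ0
        filter_upwards [this] with t hct
        linarith
    · right; left
      push_neg at hR hL
      have hconst : ∀ t, 0 ≤ t → s t = q := fun t ht =>
        le_antisymm (hR t ht) (hL t ht)
      have : Tendsto (fun _ : ℝ => q) atTop (𝓝 q) := tendsto_const_nhds
      refine this.congr' ?_
      filter_upwards [eventually_ge_atTop (0:ℝ)] with t ht
      exact (hconst t ht).symm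

lemma pc_II_comp {E F : Type*} [NormedAddCommGroup E] [NormedSpace ℝ E]
    [NormedAddCommGroup F] [NormedSpace ℝ F]
    (L : E →L[ℝ] F) (v : ℝ → E) {c d : ℝ} (h : IntervalIntegrable v volume c d) :
    IntervalIntegrable (fun t => L (v t)) volume c d :=
  ⟨L.integrable_comp h.1, L.integrable_comp h.2⟩

noncomputable def pcL (p : ℕ) : Vec p →L[ℝ] ℝ := ∑ i, EuclideanSpace.proj (𝕜 := ℝ) i

lemma pcL_apply {p : ℕ} (y : Vec p) : pcL p y = sigma' y := by
  simp [pcL, sigma', ContinuousLinearMap.sum_apply]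

lemma pc_interior_coord {p : ℕ} (ρ : Vec p) {y : Vec p}
    (hy : y ∈ interior (Xs ρ)) (i : Fin p) : 0 < y i ∧ y i < ρ i := by
  obtain ⟨ε, hε, hball⟩ := Metric.mem_nhds_iff.1 (mem_interior_iff_mem_nhds.1 hy)
  have hnorm : ‖EuclideanSpace.single i (ε / 2)‖ = ε / 2 := by
    rw [EuclideanSpace.norm_single]
    exact abs_of_pos (by linarith)
  constructor
  · have hz : y - EuclideanSpace.single i (ε / 2) ∈ Metric.ball y ε := by
      rw [Metric.mem_ball, dist_eq_norm]
      have : y - EuclideanSpace.single i (ε / 2) - y = -(EuclideanSpace.single i (ε / 2)) := by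
        abel
      rw [this, norm_neg, hnorm]
      linarith
    have := (hball hz) i
    have hzi : (y - EuclideanSpace.single i (ε / 2)) i = y i - ε / 2 := by
      simp [PiLp.sub_apply]
    rw [hzi] at this
    have := this.1
    linarith
  · have hz : y + EuclideanSpace.single i (ε / 2) ∈ Metric.ball y ε := by
      rw [Metric.mem_ball, dist_eq_norm]
      have : y + EuclideanSpace.single i (ε / 2) - y = EuclideanSpace.single i (ε / 2) := by
        abel
      rw [this, hnorm]
      linarith
    have := (hball hz) i
    have hzi : (y + EuclideanSpace.single i (ε / 2)) i = y i + ε / 2 := by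
      simp [PiLp.add_apply]
    rw [hzi] at this
    have := this.2
    linarith

lemma pc_mem_interior {p : ℕ} (ρ : Vec p) {y : Vec p}
    (h : ∀ i, 0 < y i ∧ y i < ρ i) : y ∈ interior (Xs ρ) := by
  have hU : IsOpen {z : Vec p | ∀ i, 0 < z i ∧ z i < ρ i} := by
    have hEq : {z : Vec p | ∀ i, 0 < z i ∧ z i < ρ i}
        = ⋂ i, ((EuclideanSpace.proj (𝕜 := ℝ) i) ⁻¹' (Ioo 0 (ρ i))) := by
      ext z
      simp only [Set.mem_setOf_eq, Set.mem_iInter, Set.mem_preimage, Set.mem_Ioo]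
      rfl
    rw [hEq]
    exact isOpen_iInter_of_finite fun i =>
      isOpen_Ioo.preimage (EuclideanSpace.proj (𝕜 := ℝ) i).continuous
  have hsub : {z : Vec p | ∀ i, 0 < z i ∧ z i < ρ i} ⊆ Xs ρ := by
    intro z hz i
    exact ⟨le_of_lt (hz i).1, le_of_lt (hz i).2⟩
  exact interior_maximal hsub hU h

end PCAux

theorem population_convergence_from_nonattracting_level
    {p : ℕ} (hp : 0 < p) (ρ : Vec p) (hρ : ∀ i, 0 < ρ i) (hsum : ∑ i, ρ i = 1)
    (uA uB : Fin p → Polynomial ℝ)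
    (a q b : ℝ) (ha : 0 ≤ a) (hb : b ≤ 1) (haq : a < q) (hqb : q < b)
    (hleft : ∀ y ∈ Set.Ioo a q, ubar uA y < ubar uB y)
    (hright : ∀ y ∈ Set.Ioo q b, ubar uB y < ubar uA y)
    (hA : (a = 0 ∧ ubar uA 0 < ubar uB 0) ∨
      ∃ a₀ < a, ∀ y ∈ Set.Ioo a₀ a, ubar uB y < ubar uA y)
    (hB : (b = 1 ∧ ubar uB 1 < ubar uA 1) ∨
      ∃ b₀ > b, ∀ y ∈ Set.Ioo b b₀, ubar uA y < ubar uB y) :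
    ∀ x : ℝ → Vec p, IsPopSol ρ uA uB x → x 0 ∈ interior (Xs ρ) →
      sigma' (x 0) = q →
      Filter.Tendsto x Filter.atTop (nhds (a • ρ)) ∨
      Filter.Tendsto x Filter.atTop (nhds (q • ρ)) ∨
      Filter.Tendsto x Filter.atTop (nhds (b • ρ)) := by
  intro x hsol hx0int hx0q
  obtain ⟨hXmem, v, haeV, hintV, heqV⟩ := hsol
  have hLa : ∀ y : Vec p, pcL p y = sigma' y := fun y => pcL_apply y
  have hLρ : sigma' ρ = 1 := hsum
  -- scalar data
  set gs : ℝ → ℝ := fun τ => sigma' (v τ) with hgs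
  have hgs_eqL : gs = fun τ => pcL p (v τ) := by
    funext τ; rw [hLa]
  have hgs_int : ∀ t, 0 ≤ t → IntervalIntegrable gs volume 0 t := by
    intro t ht
    rw [hgs_eqL]
    exact pc_II_comp (pcL p) v (hintV t ht)
  have hx_cont : ContinuousOn x (Ici 0) :=
    (continuousOn_const.add (pc_primitive_continuousOn v hintV)).congr
      (fun t ht => heqV t ht)
  have hmax_mem : ∀ t : ℝ, max t 0 ∈ Ici (0:ℝ) := fun t => mem_Ici.2 (le_max_right _ _)
  set X : ℝ → Vec p := fun t => x (max t 0) with hXdef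
  have hXc : Continuous X :=
    hx_cont.comp_continuous (continuous_id.max continuous_const) hmax_mem
  have hXeq : ∀ t, 0 ≤ t → X t = x t := by
    intro t ht
    rw [hXdef]
    simp only [max_eq_left ht]
  set S : ℝ → ℝ := fun t => sigma' (X t) with hSdef
  have hSc : Continuous S := by
    have h1 : S = fun t => pcL p (X t) := by funext t; rw [hLa]
    rw [h1]
    exact (pcL p).continuous.comp hXc
  have hSeq : ∀ t, 0 ≤ t → S t = sigma' (x t) := by
    intro t ht
    rw [hSdef]
    simp only
    rw [hXeq t ht]
  have hS0 : S 0 = q := by rw [hSeq 0 le_rfl, hx0q]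
  -- integral identity for S
  have hsq : ∀ t, 0 ≤ t → S t = q + ∫ τ in (0:ℝ)..t, gs τ := by
    intro t ht
    rw [hSeq t ht, heqV t ht]
    have h2 : sigma' (x 0 + ∫ s in (0:ℝ)..t, v s)
        = sigma' (x 0) + sigma' (∫ s in (0:ℝ)..t, v s) := by
      rw [← hLa, ← hLa, ← hLa, map_add]
    rw [h2, hx0q]
    congr 1
    rw [← hLa, ← (pcL p).intervalIntegral_comp_comm (hintV t ht)]
    apply intervalIntegral.integral_congr
    intro τ _
    exact hLa (v τ)
  have hig : PCInt S gs := by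
    constructor
    · intro t₁ t₂ h1 h2
      exact (hgs_int t₁ h1).symm.trans (hgs_int t₂ (h1.trans h2))
    · intro t₁ t₂ h1 h2
      rw [hsq t₁ h1, hsq t₂ (h1.trans h2),
        ← intervalIntegral.integral_add_adjacent_intervals (hgs_int t₁ h1)
          ((hgs_int t₁ h1).symm.trans (hgs_int t₂ (h1.trans h2)))]
      ring
  -- bounds on S
  have hSbd0 : ∀ t, 0 ≤ t → 0 ≤ S t := by
    intro t ht
    rw [hSeq t ht]
    exact Finset.sum_nonneg fun i _ => ((hXmem t ht) i).1
  have hSbd1 : ∀ t, 0 ≤ t → S t ≤ 1 := by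
    intro t ht
    rw [hSeq t ht]
    calc sigma' (x t) = ∑ i, x t i := rfl
      _ ≤ ∑ i, ρ i := Finset.sum_le_sum fun i _ => ((hXmem t ht) i).2
      _ = 1 := hsum
  -- a.e. structure
  have hstr : ∀ᵐ τ ∂(volume.restrict (Ici (0:ℝ))),
      v τ = (gs τ + sigma' (x τ)) • ρ - x τ ∧ 0 ≤ gs τ + sigma' (x τ) ∧
      gs τ + sigma' (x τ) ≤ 1 ∧
      (x τ ∈ interior (Xs ρ) →
        ((ubar uB (sigma' (x τ)) < ubar uA (sigma' (x τ)) → gs τ = 1 - sigma' (x τ)) ∧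
         (ubar uA (sigma' (x τ)) < ubar uB (sigma' (x τ)) → gs τ = - sigma' (x τ)))) := by
    filter_upwards [haeV] with τ hv
    have hsub : ∀ y z : Vec p, sigma' (y - z) = sigma' y - sigma' z := by
      intro y z
      rw [← hLa, ← hLa, ← hLa, map_sub]
    have hsmul : ∀ (c : ℝ) (y : Vec p), sigma' (c • y) = c * sigma' y := by
      intro c y
      rw [← hLa, ← hLa, _root_.map_smul, smul_eq_mul]
    rw [Vmap] at hv
    split_ifs at hv with h1 h2
    · rw [mem_singleton_iff] at hv
      have hgsv : gs τ = 1 - sigma' (x τ) := by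
        show sigma' (v τ) = _
        rw [hv, hsub, hLρ]
      have hco : gs τ + sigma' (x τ) = 1 := by rw [hgsv]; ring
      refine ⟨by rw [hco, one_smul]; exact hv, by rw [hco]; norm_num, by rw [hco],
        fun _ => ⟨fun _ => hgsv, fun hAB => absurd (lt_trans h1.2 hAB) (lt_irrefl _)⟩⟩
    · rw [mem_singleton_iff] at hv
      have hgsv : gs τ = - sigma' (x τ) := by
        show sigma' (v τ) = _
        rw [hv]
        rw [← hLa, ← hLa, map_neg]
      have hco : gs τ + sigma' (x τ) = 0 := by rw [hgsv]; ring
      refine ⟨by rw [hco, zero_smul, zero_sub]; exact hv, by rw [hco], by rw [hco]; norm_num,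
        fun _ => ⟨fun hBA => absurd (lt_trans h2.2 hBA) (lt_irrefl _), fun _ => hgsv⟩⟩
    · obtain ⟨θ1, θ2, hθ1, hθ2, hθs, hrep⟩ := hv
      have hvτ : v τ = θ1 • ρ - x τ := by
        have hrw : θ1 • (ρ - x τ) + θ2 • (-(x τ)) = θ1 • ρ - (θ1 + θ2) • (x τ) := by
          module
        rw [← hrep, hrw, hθs, one_smul]
      have hgsv : gs τ = θ1 - sigma' (x τ) := by
        show sigma' (v τ) = _
        rw [hvτ, hsub, hsmul, hLρ, mul_one]
      have hco : gs τ + sigma' (x τ) = θ1 := by rw [hgsv]; ring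
      refine ⟨by rw [hco]; exact hvτ, by rw [hco]; exact hθ1, by rw [hco]; linarith,
        fun hint' => ⟨fun hBA => absurd ⟨hint', hBA⟩ h1, fun hAB => absurd ⟨hint', hAB⟩ h2⟩⟩
  -- coordinate integrability
  have hvii : ∀ (i : Fin p) (t : ℝ), 0 ≤ t → IntervalIntegrable (fun τ => v τ i) volume 0 t := by
    intro i t ht
    exact pc_II_comp (EuclideanSpace.proj (𝕜 := ℝ) i) v (hintV t ht)
  have hxii : ∀ (i : Fin p) (t : ℝ), 0 ≤ t → IntervalIntegrable (fun τ => x τ i) volume 0 t := by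
    intro i t ht
    apply ContinuousOn.intervalIntegrable
    have h3 : ContinuousOn (fun τ => x τ i) (Ici 0) :=
      (EuclideanSpace.proj (𝕜 := ℝ) i).continuous.comp_continuousOn hx_cont
    apply h3.mono
    rw [uIcc_of_le ht]
    exact Icc_subset_Ici_self
  have hxic : ∀ i : Fin p, Continuous (fun t => X t i) := fun i =>
    (EuclideanSpace.proj (𝕜 := ℝ) i).continuous.comp hXc
  have hxieq : ∀ (i : Fin p) t, 0 ≤ t → x t i = x 0 i + ∫ τ in (0:ℝ)..t, v τ i := by
    intro i t ht
    rw [heqV t ht]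
    have hadd : (x 0 + ∫ s in (0:ℝ)..t, v s) i = x 0 i + (∫ s in (0:ℝ)..t, v s) i := rfl
    rw [hadd]
    congr 1
    exact ((EuclideanSpace.proj (𝕜 := ℝ) i).intervalIntegral_comp_comm (hintV t ht)).symm
  -- coordinate positivity
  have hcoord : ∀ (i : Fin p) (t : ℝ), 0 ≤ t →
      x 0 i * Real.exp (-t) ≤ x t i ∧ (ρ i - x 0 i) * Real.exp (-t) ≤ ρ i - x t i := by
    intro i
    set ci : ℝ → ℝ := fun τ => v τ i + x τ i with hci
    have hci_int : ∀ t, 0 ≤ t → IntervalIntegrable ci volume 0 t := fun t ht =>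
      (hvii i t ht).add (hxii i t ht)
    have hci_bd : ∀ᵐ τ ∂(volume.restrict (Ici (0:ℝ))), 0 ≤ ci τ ∧ ci τ ≤ ρ i := by
      filter_upwards [hstr] with τ hτ
      obtain ⟨hrep, h0, h1, -⟩ := hτ
      have hciτ : ci τ = (gs τ + sigma' (x τ)) * ρ i := by
        show v τ i + x τ i = _
        rw [hrep]
        have : ((gs τ + sigma' (x τ)) • ρ - x τ) i
            = (gs τ + sigma' (x τ)) * ρ i - x τ i := rfl
        rw [this]
        ring
      rw [hciτ]
      have hρi := le_of_lt (hρ i)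
      constructor
      · exact mul_nonneg h0 hρi
      · nlinarith
    have hci_bd' : ∀ᵐ τ ∂(volume : Measure ℝ), τ ∈ Ici (0:ℝ) → 0 ≤ ci τ ∧ ci τ ≤ ρ i :=
      (ae_restrict_iff' measurableSet_Ici).1 hci_bd
    have hIsplit : ∀ (w : ℝ → ℝ), (∀ t, 0 ≤ t → IntervalIntegrable w volume 0 t) →
        ∀ t₁ t₂, 0 ≤ t₁ → t₁ ≤ t₂ →
        (∫ τ in (0:ℝ)..t₂, w τ) = (∫ τ in (0:ℝ)..t₁, w τ) + ∫ τ in t₁..t₂, w τ := by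
      intro w hw t₁ t₂ h1 h2
      exact (intervalIntegral.integral_add_adjacent_intervals (hw t₁ h1)
        ((hw t₁ h1).symm.trans (hw t₂ (h1.trans h2)))).symm
    have hsplit_vi : ∀ t, 0 ≤ t → (∫ τ in (0:ℝ)..t, v τ i)
        = (∫ τ in (0:ℝ)..t, ci τ) - ∫ τ in (0:ℝ)..t, x τ i := by
      intro t ht
      rw [← intervalIntegral.integral_sub (hci_int t ht) (hxii i t ht)]
      apply intervalIntegral.integral_congr
      intro τ _
      show v τ i = ci τ - x τ i
      show v τ i = (v τ i + x τ i) - x τ i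
      ring
    have hlow : ∀ t, 0 ≤ t → x 0 i * Real.exp (-t) ≤ x t i := by
      set u1 : ℝ → ℝ := fun t => ∫ τ in (0:ℝ)..(max t 0), ci τ with hu1
      have hu1c : Continuous u1 :=
        (pc_primitive_continuousOn ci hci_int).comp_continuous
          (continuous_id.max continuous_const) hmax_mem
      have hu1eq : ∀ t, 0 ≤ t → u1 t = ∫ τ in (0:ℝ)..t, ci τ := by
        intro t' ht'
        show (∫ τ in (0:ℝ)..(max t' 0), ci τ) = _
        rw [max_eq_left ht']
      have hu1mono : ∀ t₁ t₂, 0 ≤ t₁ → t₁ ≤ t₂ → u1 t₁ ≤ u1 t₂ := by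
        intro t₁ t₂ h1 h2
        rw [hu1eq t₁ h1, hu1eq t₂ (h1.trans h2), hIsplit ci hci_int t₁ t₂ h1 h2]
        have hnn : 0 ≤ ∫ τ in t₁..t₂, ci τ := by
          apply intervalIntegral.integral_nonneg_of_ae_restrict h2
          have h4 : ∀ᵐ τ ∂(volume.restrict (Icc t₁ t₂)),
              τ ∈ Ici (0:ℝ) → 0 ≤ ci τ ∧ ci τ ≤ ρ i := ae_restrict_of_ae hci_bd'
          have h5 : ∀ᵐ τ ∂(volume.restrict (Icc t₁ t₂)), τ ∈ Icc t₁ t₂ :=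
            ae_restrict_mem measurableSet_Icc
          filter_upwards [h4, h5] with τ h6 h7
          exact (h6 (le_trans h1 h7.1)).1
        linarith
      have hu10 : u1 0 = 0 := by
        rw [hu1eq 0 le_rfl, intervalIntegral.integral_same]
      have hfeq : ∀ t, 0 ≤ t → X t i = X 0 i + u1 t - ∫ τ in (0:ℝ)..t, X τ i := by
        intro t ht
        have hIX : (∫ τ in (0:ℝ)..t, X τ i) = ∫ τ in (0:ℝ)..t, x τ i := by
          apply intervalIntegral.integral_congr
          intro τ hτ
          rw [uIcc_of_le ht] at hτ
          show X τ i = x τ i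
          rw [hXeq τ hτ.1]
        have hXt : X t i = x t i := by rw [hXeq t ht]
        have hX0 : X 0 i = x 0 i := by rw [hXeq 0 le_rfl]
        rw [hXt, hX0, hIX, hu1eq t ht, hxieq i t ht, hsplit_vi t ht]
        ring
      have := pc_pos (fun t => X t i) u1 (hxic i) hu1c hu1mono hu10 hfeq
      intro t ht
      have h8 : X 0 i * Real.exp (-t) ≤ X t i := this t ht
      have hXt : X t i = x t i := by rw [hXeq t ht]
      have hX0 : X 0 i = x 0 i := by rw [hXeq 0 le_rfl]
      rw [hXt, hX0] at h8
      exact h8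
    have hupp : ∀ t, 0 ≤ t → (ρ i - x 0 i) * Real.exp (-t) ≤ ρ i - x t i := by
      set u2 : ℝ → ℝ := fun t => ∫ τ in (0:ℝ)..(max t 0), (ρ i - ci τ) with hu2
      have hc2int : ∀ t, 0 ≤ t → IntervalIntegrable (fun τ => ρ i - ci τ) volume 0 t :=
        fun t ht => intervalIntegrable_const.sub (hci_int t ht)
      have hu2c : Continuous u2 :=
        (pc_primitive_continuousOn _ hc2int).comp_continuous
          (continuous_id.max continuous_const) hmax_mem
      have hu2eq : ∀ t, 0 ≤ t → u2 t = ∫ τ in (0:ℝ)..t, (ρ i - ci τ) := by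
        intro t' ht'
        show (∫ τ in (0:ℝ)..(max t' 0), (ρ i - ci τ)) = _
        rw [max_eq_left ht']
      have hu2mono : ∀ t₁ t₂, 0 ≤ t₁ → t₁ ≤ t₂ → u2 t₁ ≤ u2 t₂ := by
        intro t₁ t₂ h1 h2
        rw [hu2eq t₁ h1, hu2eq t₂ (h1.trans h2), hIsplit _ hc2int t₁ t₂ h1 h2]
        have hnn : 0 ≤ ∫ τ in t₁..t₂, (ρ i - ci τ) := by
          apply intervalIntegral.integral_nonneg_of_ae_restrict h2
          have h4 : ∀ᵐ τ ∂(volume.restrict (Icc t₁ t₂)),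
              τ ∈ Ici (0:ℝ) → 0 ≤ ci τ ∧ ci τ ≤ ρ i := ae_restrict_of_ae hci_bd'
          have h5 : ∀ᵐ τ ∂(volume.restrict (Icc t₁ t₂)), τ ∈ Icc t₁ t₂ :=
            ae_restrict_mem measurableSet_Icc
          filter_upwards [h4, h5] with τ h6 h7
          have := (h6 (le_trans h1 h7.1)).2
          show (0:ℝ) ≤ ρ i - ci τ
          linarith
        linarith
      have hu20 : u2 0 = 0 := by
        rw [hu2eq 0 le_rfl, intervalIntegral.integral_same]
      have hfeq : ∀ t, 0 ≤ t → ρ i - X t i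
          = (ρ i - X 0 i) + u2 t - ∫ τ in (0:ℝ)..t, (ρ i - X τ i) := by
        intro t ht
        have hIX : (∫ τ in (0:ℝ)..t, (ρ i - X τ i)) = ∫ τ in (0:ℝ)..t, (ρ i - x τ i) := by
          apply intervalIntegral.integral_congr
          intro τ hτ
          rw [uIcc_of_le ht] at hτ
          show ρ i - X τ i = ρ i - x τ i
          rw [hXeq τ hτ.1]
        have hXt : X t i = x t i := by rw [hXeq t ht]
        have hX0 : X 0 i = x 0 i := by rw [hXeq 0 le_rfl]
        have hIc : (∫ τ in (0:ℝ)..t, (ρ i - ci τ))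
            = t * ρ i - ∫ τ in (0:ℝ)..t, ci τ := by
          rw [intervalIntegral.integral_sub intervalIntegrable_const (hci_int t ht),
            intervalIntegral.integral_const, smul_eq_mul]
          ring
        have hIx2 : (∫ τ in (0:ℝ)..t, (ρ i - x τ i))
            = t * ρ i - ∫ τ in (0:ℝ)..t, x τ i := by
          rw [intervalIntegral.integral_sub intervalIntegrable_const (hxii i t ht),
            intervalIntegral.integral_const, smul_eq_mul]
          ring
        rw [hXt, hX0, hIX, hu2eq t ht, hIc, hIx2]
        have hx5 := hxieq i t ht
        rw [hsplit_vi t ht] at hx5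
        linarith
      have := pc_pos (fun t => ρ i - X t i) u2 (continuous_const.sub (hxic i)) hu2c
        hu2mono hu20 hfeq
      intro t ht
      have h8 : (ρ i - X 0 i) * Real.exp (-t) ≤ ρ i - X t i := this t ht
      have hXt : X t i = x t i := by rw [hXeq t ht]
      have hX0 : X 0 i = x 0 i := by rw [hXeq 0 le_rfl]
      rw [hXt, hX0] at h8
      exact h8
    exact fun t ht => ⟨hlow t ht, hupp t ht⟩
  -- interior invariance
  have hintall : ∀ t, 0 ≤ t → x t ∈ interior (Xs ρ) := by
    intro t ht
    apply pc_mem_interior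
    intro i
    obtain ⟨h1, h2⟩ := hcoord i t ht
    obtain ⟨h3, h4⟩ := pc_interior_coord ρ hx0int i
    constructor
    · exact lt_of_lt_of_le (mul_pos h3 (Real.exp_pos (-t))) h1
    · nlinarith [mul_pos (sub_pos.2 h4) (Real.exp_pos (-t))]
  -- forcing conditions
  have hmemIci : ∀ᵐ τ ∂(volume.restrict (Ici (0:ℝ))), τ ∈ Ici (0:ℝ) :=
    ae_restrict_mem measurableSet_Ici
  have hfL' : ∀ᵐ τ ∂(volume.restrict (Ici (0:ℝ))), a < S τ → S τ < q → gs τ = - S τ := by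
    filter_upwards [hstr, hmemIci] with τ hτ hτ0
    intro h1 h2
    rw [hSeq τ hτ0] at h1 h2 ⊢
    exact (hτ.2.2.2 (hintall τ hτ0)).2 (hleft _ ⟨h1, h2⟩)
  have hfR' : ∀ᵐ τ ∂(volume.restrict (Ici (0:ℝ))), q < S τ → S τ < b → gs τ = 1 - S τ := by
    filter_upwards [hstr, hmemIci] with τ hτ hτ0
    intro h1 h2
    rw [hSeq τ hτ0] at h1 h2 ⊢
    exact (hτ.2.2.2 (hintall τ hτ0)).1 (hright _ ⟨h1, h2⟩)
  have hfA' : a = 0 ∨ ∃ a₀, a₀ < a ∧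
      (∀ᵐ τ ∂(volume.restrict (Ici (0:ℝ))), a₀ < S τ → S τ < a → gs τ = 1 - S τ) := by
    rcases hA with ⟨h0, -⟩ | ⟨a₀, ha₀, hAA⟩
    · exact Or.inl h0
    · refine Or.inr ⟨a₀, ha₀, ?_⟩
      filter_upwards [hstr, hmemIci] with τ hτ hτ0
      intro h1 h2
      rw [hSeq τ hτ0] at h1 h2 ⊢
      exact (hτ.2.2.2 (hintall τ hτ0)).1 (hAA _ ⟨h1, h2⟩)
  have hfB' : b = 1 ∨ ∃ b₀, b < b₀ ∧
      (∀ᵐ τ ∂(volume.restrict (Ici (0:ℝ))), b < S τ → S τ < b₀ → gs τ = - S τ) := by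
    rcases hB with ⟨h0, -⟩ | ⟨b₀, hb₀, hBB⟩
    · exact Or.inl h0
    · refine Or.inr ⟨b₀, hb₀, ?_⟩
      filter_upwards [hstr, hmemIci] with τ hτ hτ0
      intro h1 h2
      rw [hSeq τ hτ0] at h1 h2 ⊢
      exact (hτ.2.2.2 (hintall τ hτ0)).2 (hBB _ ⟨h1, h2⟩)
  have htend3 := pc_sigma_tendsto S gs hSc hig a q b ha hb haq hqb hSbd0 hSbd1 hS0
    hfL' hfR' hfA' hfB'
  -- decay identity
  have hdecayC : ∀ (i : Fin p) (t : ℝ), 0 ≤ t →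
      X t i - ρ i * S t = (x 0 i - ρ i * q) * Real.exp (-t) := by
    intro i
    have hcont : Continuous (fun t => X t i - ρ i * S t) :=
      (hxic i).sub (continuous_const.mul hSc)
    have hwint : ∀ t, 0 ≤ t → IntervalIntegrable (fun τ => v τ i - ρ i * gs τ) volume 0 t :=
      fun t ht => (hvii i t ht).sub ((hgs_int t ht).const_mul (ρ i))
    have hae : ∀ᵐ τ ∂(volume.restrict (Ici (0:ℝ))),
        v τ i - ρ i * gs τ = - (X τ i - ρ i * S τ) := by
      filter_upwards [hstr, hmemIci] with τ hτ hτ0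
      have hXτ : X τ i = x τ i := by rw [hXeq τ hτ0]
      have hSτ : S τ = sigma' (x τ) := hSeq τ hτ0
      have hvi : v τ i = (gs τ + sigma' (x τ)) * ρ i - x τ i := by
        rw [hτ.1]
        rfl
      rw [hvi, hXτ, hSτ]
      ring
    have heq2 : ∀ t, 0 ≤ t → X t i - ρ i * S t
        = (X 0 i - ρ i * S 0) + ∫ τ in (0:ℝ)..t, (v τ i - ρ i * gs τ) := by
      intro t ht
      have hXt : X t i = x t i := by rw [hXeq t ht]
      have hX0 : X 0 i = x 0 i := by rw [hXeq 0 le_rfl]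
      have hIsub : (∫ τ in (0:ℝ)..t, (v τ i - ρ i * gs τ))
          = (∫ τ in (0:ℝ)..t, v τ i) - ρ i * ∫ τ in (0:ℝ)..t, gs τ := by
        rw [intervalIntegral.integral_sub (hvii i t ht) ((hgs_int t ht).const_mul (ρ i)),
          intervalIntegral.integral_const_mul]
      rw [hXt, hX0, hIsub, hxieq i t ht, hS0, hsq t ht]
      ring
    have := pc_decay (fun t => X t i - ρ i * S t) (fun τ => v τ i - ρ i * gs τ)
      hcont hwint hae heq2
    intro t ht
    have h9 : X t i - ρ i * S t = (X 0 i - ρ i * S 0) * Real.exp (-t) := this t ht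
    have hX0 : X 0 i = x 0 i := by rw [hXeq 0 le_rfl]
    rw [hX0, hS0] at h9
    exact h9
  have hdecay : ∀ t, 0 ≤ t → x t = S t • ρ + Real.exp (-t) • (x 0 - q • ρ) := by
    intro t ht
    ext i
    show x t i = (S t • ρ + Real.exp (-t) • (x 0 - q • ρ)) i
    have hrhs : (S t • ρ + Real.exp (-t) • (x 0 - q • ρ)) i
        = S t * ρ i + Real.exp (-t) * (x 0 i - q * ρ i) := rfl
    rw [hrhs]
    have h8 := hdecayC i t ht
    have hXt : X t i = x t i := by rw [hXeq t ht]
    rw [hXt] at h8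
    linarith [h8]
  -- final assembly
  have hsmul : ∀ c : ℝ, Tendsto S atTop (𝓝 c) → Tendsto x atTop (𝓝 (c • ρ)) := by
    intro c hc
    have hexp : Tendsto (fun t : ℝ => Real.exp (-t)) atTop (𝓝 0) :=
      Real.tendsto_exp_atBot.comp tendsto_neg_atTop_atBot
    have h1 : Tendsto (fun t => S t • ρ + Real.exp (-t) • (x 0 - q • ρ)) atTop
        (𝓝 (c • ρ + (0:ℝ) • (x 0 - q • ρ))) :=
      (hc.smul_const ρ).add (hexp.smul_const _)
    rw [zero_smul, add_zero] at h1
    refine h1.congr' ?_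
    filter_upwards [eventually_ge_atTop (0:ℝ)] with t ht
    exact (hdecay t ht).symm
  rcases htend3 with h | h | h
  · exact Or.inl (hsmul a h)
  · exact Or.inr (Or.inl (hsmul q h))
  · exact Or.inr (Or.inr (hsmul b h))
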